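/- Let p, q be nonnegative integers with p ≥ 1. Then the ratio A_{p,q}(i,j)/A_{p-1,q}(i,j) tends to infinity as both i and j tend to infinity: for every real number M there exist I and J such that A_{p,q}(i,j)/A_{p-1,q}(i,j) > M whenever i ≥ I and j ≥ J. -/
import Mathlib

/-- The generalized Eulerian number `eulerA p q i j` counts the paths in the Euler graph
from `(p, q)` to `(p + i, q + j)`.  It is defined by the initial conditions
`eulerA p q i 0 = (q+1)^i`, `eulerA p q 0 j = (p+1)^j` and the recurrence
`eulerA p q i j = (j+q+1) * eulerA p q (i-1) j + (i+p+1) * eulerA p q i (j-1)`. -/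
def eulerA (p q : ℕ) : ℕ → ℕ → ℕ
  | i, 0 => (q + 1) ^ i
  | 0, j + 1 => (p + 1) ^ (j + 1)
  | i + 1, j + 1 =>
      (j + 1 + q + 1) * eulerA p q i (j + 1) + (i + 1 + p + 1) * eulerA p q (i + 1) j

lemma eulerA_pos (p q : ℕ) : ∀ i j, 0 < eulerA p q i j := by
  intro i
  induction i with
  | zero =>
    intro j
    cases j with
    | zero => simp [eulerA.eq_1]
    | succ j => rw [eulerA.eq_2]; positivity
  | succ i ih =>
    intro j
    induction j with
    | zero => rw [eulerA.eq_1]; positivity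
    | succ j ihj =>
      rw [eulerA.eq_3]
      have h1 := ih (j + 1)
      positivity

/-- Key exact identity. -/
lemma eulerA_key (p q : ℕ) : ∀ i j,
    (p + q + 2) * eulerA (p + 1) q i (j + 1)
      = (j + p + q + 3) * eulerA p q i (j + 1) + (i + 1) * eulerA p q (i + 1) j := by
  intro i
  induction i with
  | zero =>
    intro j
    induction j with
    | zero =>
      rw [eulerA.eq_2, eulerA.eq_2, eulerA.eq_1]
      ring
    | succ j ihj =>
      rw [eulerA.eq_2, eulerA.eq_2] at ihj
      rw [eulerA.eq_2, eulerA.eq_2, eulerA.eq_3, eulerA.eq_2]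
      zify at ihj ⊢
      push_cast at ihj ⊢
      linear_combination ((p : ℤ) + 2) * ihj
  | succ i ih =>
    intro j
    induction j with
    | zero =>
      have hih := ih 0
      rw [eulerA.eq_1] at hih
      rw [eulerA.eq_3, eulerA.eq_3, eulerA.eq_1, eulerA.eq_1, eulerA.eq_1]
      zify at hih ⊢
      push_cast at hih ⊢
      linear_combination ((q : ℤ) + 2) * hih
    | succ j ihj =>
      have hih := ih (j + 1)
      rw [eulerA.eq_3 (p+1) q i (j+1), eulerA.eq_3 p q i (j+1), eulerA.eq_3 p q (i+1) j]
      zify at hih ihj ⊢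
      push_cast at hih ihj ⊢
      linear_combination ((j : ℤ) + q + 3) * hih + ((i : ℤ) + p + 3) * ihj

/-- The inequality `(j+p+q+1) * A_{p-1}(i,j) ≤ (p+q+1) * A_p(i,j)` for `p ≥ 1`, `j ≥ 1`. -/
lemma eulerA_ineq (p q i j : ℕ) (hp : 1 ≤ p) (hj : 1 ≤ j) :
    (j + p + q + 1) * eulerA (p - 1) q i j ≤ (p + q + 1) * eulerA p q i j := by
  obtain ⟨p', rfl⟩ : ∃ p', p = p' + 1 := ⟨p - 1, (Nat.succ_pred_eq_of_pos hp).symm⟩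
  obtain ⟨j', rfl⟩ : ∃ j', j = j' + 1 := ⟨j - 1, (Nat.succ_pred_eq_of_pos hj).symm⟩
  have h := eulerA_key p' q i j'
  simp only [Nat.add_sub_cancel]
  calc (j' + 1 + (p' + 1) + q + 1) * eulerA p' q i (j' + 1)
      = (j' + p' + q + 3) * eulerA p' q i (j' + 1) := by ring_nf
    _ ≤ (j' + p' + q + 3) * eulerA p' q i (j' + 1) + (i + 1) * eulerA p' q (i + 1) j' :=
        Nat.le_add_right _ _
    _ = (p' + q + 2) * eulerA (p' + 1) q i (j' + 1) := h.symm
    _ = (p' + 1 + q + 1) * eulerA (p' + 1) q i (j' + 1) := by ring_nf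

theorem stmt10 (p q : ℕ) (hp : 1 ≤ p) :
    ∀ M : ℝ, ∃ I J : ℕ, ∀ i j : ℕ, I ≤ i → J ≤ j →
      M < (eulerA p q i j : ℝ) / (eulerA (p - 1) q i j) := by
  intro M
  obtain ⟨n, hn⟩ := exists_nat_gt (M * (p + q + 1))
  refine ⟨0, n + 1, fun i j _ hj => ?_⟩
  have hj1 : 1 ≤ j := le_trans (Nat.le_add_left 1 n) hj
  have hkey := eulerA_ineq p q i j hp hj1
  have hBpos : (0 : ℝ) < (eulerA (p - 1) q i j : ℝ) := by
    exact_mod_cast eulerA_pos (p - 1) q i j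
  have hs : (0 : ℝ) < (p : ℝ) + q + 1 := by positivity
  have hkeyR : ((j : ℝ) + p + q + 1) * (eulerA (p - 1) q i j : ℝ)
      ≤ ((p : ℝ) + q + 1) * (eulerA p q i j : ℝ) := by exact_mod_cast hkey
  have hratio : ((j : ℝ) + p + q + 1) / ((p : ℝ) + q + 1)
      ≤ (eulerA p q i j : ℝ) / (eulerA (p - 1) q i j : ℝ) := by
    rw [div_le_div_iff₀ hs hBpos]
    nlinarith [hkeyR]
  have hMj : M < ((j : ℝ) + p + q + 1) / ((p : ℝ) + q + 1) := by
    rw [lt_div_iff₀ hs]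
    have hjn : (n : ℝ) + 1 ≤ (j : ℝ) := by exact_mod_cast hj
    have hq : (0 : ℝ) ≤ (q : ℝ) := Nat.cast_nonneg q
    have hpp : (0 : ℝ) ≤ (p : ℝ) := Nat.cast_nonneg p
    nlinarith [hn]
  exact lt_of_lt_of_le hMj hratio
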